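/- arXiv:1107.0010 — 5 statements merged into one kernel-verified Lean document; each statement's English description precedes it below -/
import Mathlib

section
/- Let H be a complex Hilbert space, let A be a bounded self-adjoint operator on H, and let f : ℝ → ℂ be a Schwartz function. Then the operator f(A) obtained by applying the continuous functional calculus of the self-adjoint operator A to the function f equals the Bochner integral ∫_ℝ (𝓕f)(ξ) · exp((2πiξ)·A) dξ, where exp denotes the exponential in the Banach algebra of bounded operators on H. -/
open MeasureTheory Filter Topology

/-- For a bounded self-adjoint operator `A` on a complex Hilbert space and a
Schwartz function `f : ℝ → ℂ`, the operator `f(A)` given by the continuous functional calculus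
(applied to the function `z ↦ f (Re z)`, which agrees with `f` on the real spectrum of `A`)
equals the Bochner integral `∫ ξ, (𝓕 f)(ξ) • exp((2πiξ) • A) dξ`. -/
theorem stmt3 {H : Type*} [NormedAddCommGroup H] [InnerProductSpace ℂ H] [CompleteSpace H]
    (A : H →L[ℂ] H) (hA : IsSelfAdjoint A) (f : SchwartzMap ℝ ℂ) :
    cfc (fun z : ℂ => f z.re) A =
      ∫ ξ : ℝ, FourierTransform.fourier (⇑f : ℝ → ℂ) ξ •
        NormedSpace.exp ((2 * (Real.pi : ℂ) * Complex.I * (ξ : ℂ)) • A) := by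
  have hN : IsStarNormal A := hA.isStarNormal
  set c : ℝ → ℂ := fun ξ => 2 * (Real.pi : ℂ) * Complex.I * (ξ : ℂ) with hc
  have hnorm : ∀ ξ : ℝ, IsStarNormal ((c ξ) • A) := by
    intro ξ
    constructor
    rw [star_smul, hA.star_eq]
    show _ * _ = _ * _
    rw [smul_mul_smul_comm, smul_mul_smul_comm, mul_comm]
  -- the exponential as cfc
  have hexpcont : ∀ ξ : ℝ, ContinuousOn (fun z : ℂ => Complex.exp (c ξ * z)) (spectrum ℂ A) :=
    fun ξ => (Complex.continuous_exp.comp (continuous_const.mul continuous_id)).continuousOn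
  have hexp : ∀ ξ : ℝ, NormedSpace.exp ((c ξ) • A) =
      cfc (fun z : ℂ => Complex.exp (c ξ * z)) A := by
    intro ξ
    rw [← CFC.complex_exp_eq_normedSpace_exp (hnorm ξ), ← cfc_comp_const_mul (c ξ) Complex.exp A]
  -- the cfc homomorphism as a continuous linear map
  let Φ : C(spectrum ℂ A, ℂ) →L[ℂ] (H →L[ℂ] H) :=
    { toLinearMap := (cfcHom hN (R := ℂ)).toAlgHom.toLinearMap,
      cont := (cfcHom_isClosedEmbedding hN).continuous }
  have hΦ : ∀ h : C(spectrum ℂ A, ℂ), Φ h = cfcHom hN h := fun _ => rfl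
  -- the exponential family as a continuous family of continuous functions
  let G : C(ℝ × spectrum ℂ A, ℂ) :=
    ⟨fun p => Complex.exp (c p.1 * (p.2 : ℂ)), by fun_prop⟩
  let g : C(ℝ, C(spectrum ℂ A, ℂ)) := G.curry
  have hg1 : ∀ (ξ : ℝ) (z : spectrum ℂ A), g ξ z = Complex.exp (c ξ * z) := fun _ _ => rfl
  have hre : ∀ z : spectrum ℂ A, (z : ℂ) = ((z : ℂ).re : ℂ) :=
    fun z => hA.mem_spectrum_eq_re z.2
  have hgle : ∀ ξ : ℝ, ‖g ξ‖ ≤ 1 := by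
    intro ξ
    rw [ContinuousMap.norm_le _ zero_le_one]
    intro z
    rw [hg1, Complex.norm_exp]
    have h0 : (c ξ * z).re = 0 := by
      rw [hre z]
      simp [hc, Complex.mul_re, Complex.mul_im]
    rw [h0, Real.exp_zero]
  -- Fourier transform of f as a Schwartz map
  set Ff : SchwartzMap ℝ ℂ := SchwartzMap.fourierTransformCLM ℂ f with hFf
  have hFfc : ⇑Ff = FourierTransform.fourier (⇑f : ℝ → ℂ) := rfl
  -- integrability
  have hint : Integrable (fun ξ : ℝ => FourierTransform.fourier (⇑f : ℝ → ℂ) ξ • g ξ) := by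
    refine Integrable.mono' (g := fun ξ => ‖Ff ξ‖) Ff.integrable.norm ?_ ?_
    · exact (Continuous.smul (by rw [← hFfc]; exact Ff.continuous : Continuous (FourierTransform.fourier (⇑f : ℝ → ℂ))) g.continuous).aestronglyMeasurable
    · filter_upwards with ξ
      refine (norm_smul_le (FourierTransform.fourier (⇑f : ℝ → ℂ) ξ) (g ξ)).trans ?_
      rw [hFfc]
      exact mul_le_of_le_one_right (norm_nonneg _) (hgle ξ)
  -- rewrite the integrand through Φ
  have hintegrand : ∀ ξ : ℝ, FourierTransform.fourier (⇑f : ℝ → ℂ) ξ •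
      NormedSpace.exp ((c ξ) • A) = Φ (FourierTransform.fourier (⇑f : ℝ → ℂ) ξ • g ξ) := by
    intro ξ
    rw [hexp ξ, cfc_apply _ A hN (hexpcont ξ)]
    exact (Φ.map_smul (FourierTransform.fourier (⇑f : ℝ → ℂ) ξ) (g ξ)).symm
  have hcont : ContinuousOn (fun z : ℂ => (f z.re : ℂ)) (spectrum ℂ A) :=
    (f.continuous.comp Complex.continuous_re).continuousOn
  calc cfc (fun z : ℂ => (f z.re : ℂ)) A
      = Φ ⟨_, hcont.restrict⟩ := by rw [cfc_apply _ A hN hcont, hΦ]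
    _ = Φ (∫ ξ : ℝ, FourierTransform.fourier (⇑f : ℝ → ℂ) ξ • g ξ) := by
        congr 1
        ext z
        have hev := ((ContinuousMap.evalCLM ℂ z).integral_comp_comm hint).symm
        simp only [ContinuousMap.evalCLM] at hev
        have heval : (∫ ξ : ℝ, FourierTransform.fourier (⇑f : ℝ → ℂ) ξ • g ξ) z
            = ∫ ξ : ℝ, FourierTransform.fourier (⇑f : ℝ → ℂ) ξ * Complex.exp (c ξ * z) := by
          refine hev.trans ?_
          refine integral_congr_ae (Eventually.of_forall fun ξ => ?_)
          show (FourierTransform.fourier (⇑f : ℝ → ℂ) ξ • g ξ) z = _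
          rw [ContinuousMap.smul_apply, smul_eq_mul, hg1]
        rw [heval]
        show (f (z : ℂ).re : ℂ) = _
        -- Fourier inversion
        have hinv := MeasureTheory.Integrable.fourierInv_fourier_eq (f := ⇑f)
          f.integrable (by rw [← hFfc]; exact Ff.integrable) f.continuous.continuousAt
          (v := (z : ℂ).re)
        rw [Real.fourierInv_eq'] at hinv
        rw [← hinv]
        apply integral_congr_ae
        filter_upwards with ξ
        rw [smul_eq_mul, mul_comm]
        congr 1
        rw [hre z]
        simp only [RCLike.inner_apply, conj_trivial, hc, Complex.ofReal_re]
        push_cast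
        ring
    _ = ∫ ξ : ℝ, FourierTransform.fourier (⇑f : ℝ → ℂ) ξ •
        NormedSpace.exp ((c ξ) • A) := by
        rw [← ContinuousLinearMap.integral_comp_comm Φ hint]
        exact (integral_congr_ae (Eventually.of_forall fun ξ => (hintegrand ξ))).symm
end

section
/- Let H be a complex Hilbert space and let A be a bounded self-adjoint operator on H; for s ∈ ℝ write cos(sA) := (exp(isA) + exp(-isA))/2, where exp denotes the exponential in the Banach algebra of bounded operators on H. If u : ℝ → H is twice differentiable with u''(s) = −A²(u(s)) for all s ∈ ℝ, u(0) = u₀, and u'(0) = 0, then u(s) = cos(sA) u₀ for all s ∈ ℝ. -/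
open MeasureTheory Filter Topology

section Stmt4Aux
open NormedSpace
variable {H : Type*} [NormedAddCommGroup H] [InnerProductSpace ℂ H] [CompleteSpace H]

/-- Derivative of `s ↦ exp ℂ ((s • c) • A)` for a complex constant `c`. -/
lemma stmt4_hasDerivAt_exp_mul (A : H →L[ℂ] H) (c : ℂ) (s : ℝ) :
    HasDerivAt (fun t : ℝ => exp (((t : ℂ) * c) • A))
      (c • (exp (((s : ℂ) * c) • A) * A)) s := by
  have h1 : HasDerivAt (fun t : ℝ => (t : ℂ) * c) c s := by
    simpa using (Complex.ofRealCLM.hasDerivAt (x := s)).mul_const c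
  have h2 := hasDerivAt_exp_smul_const (𝕂 := ℂ) A ((s : ℂ) * c)
  simpa [Function.comp_def] using h2.scomp s h1

/-- `clm_apply` for a family of `ℂ`-linear maps differentiated over `ℝ`. -/
lemma stmt4_clm_apply {c : ℝ → H →L[ℂ] H} {c' : H →L[ℂ] H} {v : ℝ → H} {v' : H} {x : ℝ}
    (hc : HasDerivAt c c' x) (hv : HasDerivAt v v' x) :
    HasDerivAt (fun y => (c y) (v y)) (c' (v x) + c x v') x := by
  have hc2 : HasDerivAt (fun y => (c y).restrictScalars ℝ) (c'.restrictScalars ℝ) x := by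
    simpa [Function.comp_def] using
      ((ContinuousLinearMap.restrictScalarsL ℂ H H ℝ ℝ).hasFDerivAt.comp_hasDerivAt x hc)
  simpa using hc2.clm_apply hv

end Stmt4Aux

/-- The operator cosine family `cos (s A) = (exp (i s A) + exp (-i s A)) / 2` of a bounded
operator `A` on a complex Hilbert space. -/
noncomputable def opCos {H : Type*} [NormedAddCommGroup H] [InnerProductSpace ℂ H]
    [CompleteSpace H] (A : H →L[ℂ] H) (s : ℝ) : H →L[ℂ] H :=
  (2 : ℂ)⁻¹ • (NormedSpace.exp (((s : ℂ) * Complex.I) • A) +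
    NormedSpace.exp ((-(s : ℂ) * Complex.I) • A))

/-- If `A` is a bounded self-adjoint operator on a complex Hilbert space and
`u : ℝ → H` is twice differentiable with `u'' = -A² u`, `u 0 = u₀`, `u' 0 = 0`, then
`u s = cos (s A) u₀` for all `s`. -/
theorem stmt4 {H : Type*} [NormedAddCommGroup H] [InnerProductSpace ℂ H] [CompleteSpace H]
    (A : H →L[ℂ] H) (hA : IsSelfAdjoint A) (u u' : ℝ → H) (u₀ : H)
    (hu : ∀ s : ℝ, HasDerivAt u (u' s) s)
    (hu' : ∀ s : ℝ, HasDerivAt u' (-(A (A (u s)))) s)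
    (hu0 : u 0 = u₀) (hu'0 : u' 0 = 0) :
    ∀ s : ℝ, u s = opCos A s u₀ := by
  clear hA
  set Ep : ℝ → (H →L[ℂ] H) := fun s => NormedSpace.exp (((s : ℂ) * Complex.I) • A) with hEpdef
  set Em : ℝ → (H →L[ℂ] H) :=
    fun s => NormedSpace.exp (((s : ℂ) * (-Complex.I)) • A) with hEmdef
  have hEp : ∀ s, HasDerivAt Ep (Complex.I • (Ep s * A)) s :=
    fun s => stmt4_hasDerivAt_exp_mul A Complex.I s
  have hEm : ∀ s, HasDerivAt Em ((-Complex.I) • (Em s * A)) s :=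
    fun s => stmt4_hasDerivAt_exp_mul A (-Complex.I) s
  have hcomm : ∀ s : ℝ, Commute ((((s : ℂ) * Complex.I)) • A) (((s : ℂ) * (-Complex.I)) • A) :=
    fun s => ((Commute.refl A).smul_left _).smul_right _
  have hPM : ∀ s : ℝ, Ep s * Em s = 1 := by
    intro s
    rw [hEpdef, hEmdef]
    letI : NormedAlgebra ℚ (H →L[ℂ] H) := NormedAlgebra.restrictScalars ℚ ℂ _
    rw [← NormedSpace.exp_add_of_commute (hcomm s), ← add_smul]
    have : (s : ℂ) * Complex.I + (s : ℂ) * (-Complex.I) = 0 := by ring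
    rw [this, zero_smul, NormedSpace.exp_zero]
  have hMP : ∀ s : ℝ, Em s * Ep s = 1 := by
    intro s
    rw [hEpdef, hEmdef]
    letI : NormedAlgebra ℚ (H →L[ℂ] H) := NormedAlgebra.restrictScalars ℚ ℂ _
    rw [← NormedSpace.exp_add_of_commute (hcomm s).symm, ← add_smul]
    have : (s : ℂ) * (-Complex.I) + (s : ℂ) * Complex.I = 0 := by ring
    rw [this, zero_smul, NormedSpace.exp_zero]
  -- the inner functions and their derivatives
  have hAu : ∀ s : ℝ, HasDerivAt (fun s => Complex.I • A (u s)) (Complex.I • A (u' s)) s := by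
    intro s
    simpa using stmt4_clm_apply (hasDerivAt_const s (Complex.I • A)) (hu s)
  -- g : e^{-isA}(u' + iAu) is constant
  have hg : ∀ s : ℝ, HasDerivAt (fun s => Em s (u' s + Complex.I • A (u s))) 0 s := by
    intro s
    have hv : HasDerivAt (fun s => u' s + Complex.I • A (u s))
        (-(A (A (u s))) + Complex.I • A (u' s)) s := (hu' s).add (hAu s)
    have hgd := stmt4_clm_apply (hEm s) hv
    convert hgd using 1
    simp only [ContinuousLinearMap.smul_apply, ContinuousLinearMap.mul_apply, map_add, _root_.map_smul,
      map_neg, smul_add, smul_smul, mul_neg, neg_mul, Complex.I_mul_I, neg_neg, one_smul]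
    module
  -- h : e^{isA}(u' - iAu) is constant
  have hh : ∀ s : ℝ, HasDerivAt (fun s => Ep s (u' s - Complex.I • A (u s))) 0 s := by
    intro s
    have hv : HasDerivAt (fun s => u' s - Complex.I • A (u s))
        (-(A (A (u s))) - Complex.I • A (u' s)) s := (hu' s).sub (hAu s)
    have hgd := stmt4_clm_apply (hEp s) hv
    convert hgd using 1
    simp only [ContinuousLinearMap.smul_apply, ContinuousLinearMap.mul_apply, map_add, _root_.map_smul,
      map_sub, map_neg, smul_add, smul_sub, smul_smul, mul_neg, neg_mul, Complex.I_mul_I, neg_neg,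
      one_smul, neg_smul]
    module
  have hE0 : ∀ c : ℂ, NormedSpace.exp ((((0:ℝ) : ℂ) * c) • A) = 1 := by
    intro c; norm_num [NormedSpace.exp_zero]
  -- the constants
  have key1 : ∀ s : ℝ, Em s (u' s + Complex.I • A (u s)) = Complex.I • A u₀ := by
    intro s
    have := is_const_of_deriv_eq_zero (f := fun s => Em s (u' s + Complex.I • A (u s)))
      (fun t => (hg t).differentiableAt) (fun t => (hg t).deriv) s 0
    rw [this, hEmdef]
    simp [hE0, hu'0, hu0]
  have key2 : ∀ s : ℝ, Ep s (u' s - Complex.I • A (u s)) = -(Complex.I • A u₀) := by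
    intro s
    have := is_const_of_deriv_eq_zero (f := fun s => Ep s (u' s - Complex.I • A (u s)))
      (fun t => (hh t).differentiableAt) (fun t => (hh t).deriv) s 0
    rw [this, hEpdef]
    simp [hE0, hu'0, hu0]
  -- invert
  have key1' : ∀ s : ℝ, u' s + Complex.I • A (u s) = Ep s (Complex.I • A u₀) := by
    intro s
    rw [← key1 s, ← ContinuousLinearMap.mul_apply, hPM s, ContinuousLinearMap.one_apply]
  have key2' : ∀ s : ℝ, u' s - Complex.I • A (u s) = Em s (-(Complex.I • A u₀)) := by
    intro s
    rw [← key2 s, ← ContinuousLinearMap.mul_apply, hMP s, ContinuousLinearMap.one_apply]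
  -- opCos in terms of Ep, Em
  have hoc : ∀ s : ℝ, opCos A s u₀ = (2 : ℂ)⁻¹ • (Ep s u₀ + Em s u₀) := by
    intro s
    simp [opCos, hEpdef, hEmdef, neg_mul, mul_neg]
  -- derivative of opCos • u₀ is u'
  have hcos : ∀ s : ℝ, HasDerivAt (fun s => opCos A s u₀) (u' s) s := by
    intro s
    have h := ((stmt4_clm_apply (hEp s) (hasDerivAt_const s u₀)).add
      (stmt4_clm_apply (hEm s) (hasDerivAt_const s u₀))).const_smul ((2 : ℂ)⁻¹)
    simp only [hoc]
    convert h using 1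
    · rfl
    have e1 := key1' s
    have e2 := key2' s
    simp only [ContinuousLinearMap.smul_apply, ContinuousLinearMap.mul_apply, map_zero,
      map_neg, _root_.map_smul, add_zero] at e1 e2 ⊢
    have : u' s = (2 : ℂ)⁻¹ • ((u' s + Complex.I • A (u s)) + (u' s - Complex.I • A (u s))) := by
      have h2 : u' s + Complex.I • A (u s) + (u' s - Complex.I • A (u s))
          = (2 : ℂ) • u' s := by rw [two_smul]; abel
      rw [h2, smul_smul]; norm_num
    rw [this, e1, e2]
    simp only [neg_smul, smul_neg]
  -- the difference is constant
  have hw : ∀ s : ℝ, HasDerivAt (fun s => u s - opCos A s u₀) 0 s := by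
    intro s
    have h := (hu s).sub (hcos s); rw [sub_self] at h; exact h
  intro s
  have hc := is_const_of_deriv_eq_zero (f := fun s => u s - opCos A s u₀)
    (fun t => (hw t).differentiableAt) (fun t => (hw t).deriv) s 0
  have h0 : opCos A (0 : ℝ) u₀ = u₀ := by
    simp only [opCos, Complex.ofReal_zero, zero_mul, neg_zero, zero_smul, NormedSpace.exp_zero,
      ContinuousLinearMap.smul_apply, ContinuousLinearMap.add_apply, ContinuousLinearMap.one_apply]
    rw [← two_smul ℂ, smul_smul]
    norm_num
  rw [hu0, h0, sub_self] at hc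
  exact sub_eq_zero.mp hc
end

section
/- Let H be a complex Hilbert space, let A be a bounded self-adjoint operator on H, and let Θ be a bounded operator on H; for s ∈ ℝ write cos(sA) := (exp(isA) + exp(-isA))/2, where exp denotes the exponential in the Banach algebra of bounded operators on H, and S_A(t) := ∫₀ᵗ cos(τA) dτ (Bochner integral). Then for every s ∈ ℝ, Θ ∘ cos(sA) − cos(sA) ∘ Θ = ∫₀ˢ S_A(s−r) ∘ (A²Θ − ΘA²) ∘ cos(rA) dr, the integral being a Bochner integral in the Banach algebra of bounded operators. -/
set_option synthInstance.maxHeartbeats 800000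
set_option maxHeartbeats 1600000


open MeasureTheory Filter Topology intervalIntegral

/-- The operator sine family `S_A (t) = ∫₀ᵗ cos (τ A) dτ` of a bounded operator `A` on a
complex Hilbert space. -/
noncomputable def opSin {H : Type*} [NormedAddCommGroup H] [InnerProductSpace ℂ H]
    [CompleteSpace H] (A : H →L[ℂ] H) (t : ℝ) : H →L[ℂ] H :=
  ∫ τ in (0 : ℝ)..t, opCos A τ

section aux

variable {H : Type*} [NormedAddCommGroup H] [InnerProductSpace ℂ H] [CompleteSpace H]
  (A : H →L[ℂ] H)

/-- Auxiliary exponential family. -/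
noncomputable def opE (t : ℝ) : H →L[ℂ] H := NormedSpace.exp (t • (Complex.I • A))

lemma opCos_eq (t : ℝ) : opCos A t = (2 : ℂ)⁻¹ • (opE A t + opE A (-t)) := by
  have h1 : ((t : ℂ) * Complex.I) • A = t • (Complex.I • A) := by
    rw [mul_smul]
    norm_cast
  have h2 : (-(t : ℂ) * Complex.I) • A = (-t : ℝ) • (Complex.I • A) := by
    rw [mul_smul]
    norm_cast
  rw [opCos, opE, opE, h1, h2]

lemma hasDerivAt_opE (t : ℝ) :
    HasDerivAt (opE A) (opE A t * (Complex.I • A)) t := by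
  have h := hasDerivAt_exp_smul_const (Complex.I • A) t
  simp only [mul_smul_comm] at h ⊢
  exact h

lemma hasDerivAt_opE_neg (t : ℝ) :
    HasDerivAt (fun r : ℝ => opE A (-r)) (-(opE A (-t) * (Complex.I • A))) t := by
  have h := (hasDerivAt_opE A (-t)).scomp t (hasDerivAt_neg t)
  simp at h ⊢
  exact h

lemma hasDerivAt_opCos (t : ℝ) :
    HasDerivAt (opCos A)
      ((2 : ℂ)⁻¹ • (Complex.I • (opE A t * A - opE A (-t) * A))) t := by
  have h0 := ((hasDerivAt_opE A t).add (hasDerivAt_opE_neg A t)).const_smul ((2 : ℂ)⁻¹)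
  have h : HasDerivAt (fun t : ℝ => (2 : ℂ)⁻¹ • (opE A t + opE A (-t))) _ t := h0
  have hfun : (fun t : ℝ => (2 : ℂ)⁻¹ • (opE A t + opE A (-t))) = opCos A :=
    funext fun t => (opCos_eq A t).symm
  rw [hfun] at h
  convert h using 2
  rw [mul_smul_comm, mul_smul_comm, smul_sub]
  abel

lemma continuous_opCos : Continuous (opCos A) := by
  have h : Differentiable ℝ (opCos A) := fun t => (hasDerivAt_opCos A t).differentiableAt
  exact h.continuous

lemma hasDerivAt_opSin (t : ℝ) : HasDerivAt (opSin A) (opCos A t) t := by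
  haveI : SecondCountableTopologyEither ℝ (H →L[ℂ] H) :=
    secondCountableTopologyEither_of_left ℝ (H →L[ℂ] H)
  exact intervalIntegral.integral_hasDerivAt_right
    ((continuous_opCos A).intervalIntegrable 0 t)
    ((continuous_opCos A).stronglyMeasurableAtFilter _ _)
    (continuous_opCos A).continuousAt

lemma continuous_opSin : Continuous (opSin A) := by
  have h : Differentiable ℝ (opSin A) := fun t => (hasDerivAt_opSin A t).differentiableAt
  exact h.continuous

lemma opSin_zero : opSin A 0 = 0 := intervalIntegral.integral_same

lemma opE_zero : opE A 0 = 1 := by simp [opE, NormedSpace.exp_zero]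

lemma opCos_zero : opCos A 0 = 1 := by
  rw [opCos_eq, neg_zero, opE_zero]
  rw [← two_smul ℂ (1 : H →L[ℂ] H), smul_smul]
  norm_num

lemma commute_opE (t : ℝ) : Commute A (opE A t) :=
  (((Commute.refl A).smul_right Complex.I).smul_right t).exp_right

lemma commute_opCos (t : ℝ) : Commute A (opCos A t) := by
  rw [opCos_eq]
  exact ((commute_opE A t).add_right (commute_opE A (-t))).smul_right _

lemma commute_opSin (t : ℝ) : Commute A (opSin A t) := by
  have hderiv : ∀ u : ℝ, HasDerivAt (fun r => A * opSin A r - opSin A r * A) 0 u := by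
    intro u
    have h1 := (hasDerivAt_opSin A u).const_mul A
    have h2 := (hasDerivAt_opSin A u).mul_const A
    have h := h1.sub h2
    simp [(commute_opCos A u).eq] at h ⊢
    exact h
  have hconst : A * opSin A t - opSin A t * A = A * opSin A 0 - opSin A 0 * A :=
    is_const_of_deriv_eq_zero (fun u => (hderiv u).differentiableAt)
      (fun u => (hderiv u).deriv) t 0
  rw [opSin_zero] at hconst
  simp only [mul_zero, zero_mul, sub_zero] at hconst
  exact sub_eq_zero.mp hconst

lemma hasDerivAt_opCos' (t : ℝ) :
    HasDerivAt (opCos A) (-(A ^ 2 * opSin A t)) t := by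
  have key : ∀ u : ℝ,
      (2 : ℂ)⁻¹ • (Complex.I • (opE A u * A - opE A (-u) * A)) = -(A ^ 2 * opSin A u) := by
    have hderiv : ∀ u : ℝ, HasDerivAt
        (fun r : ℝ => (2 : ℂ)⁻¹ • (Complex.I • (opE A r * A - opE A (-r) * A))
          + A ^ 2 * opSin A r) 0 u := by
      intro u
      have h1 := (hasDerivAt_opE A u).mul_const A
      have h2 := (hasDerivAt_opE_neg A u).mul_const A
      have h3 := ((h1.sub h2).const_smul Complex.I).const_smul ((2 : ℂ)⁻¹)
      have h4 := (hasDerivAt_opSin A u).const_mul (A ^ 2)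
      have h := h3.add h4
      refine h.congr_deriv (Eq.symm ?_)
      have e1 : opE A u * (Complex.I • A) * A = Complex.I • (opE A u * A ^ 2) := by
        rw [mul_smul_comm, smul_mul_assoc, mul_assoc, sq]
      have e2 : -(opE A (-u) * (Complex.I • A)) * A = -(Complex.I • (opE A (-u) * A ^ 2)) := by
        rw [neg_mul, mul_smul_comm, smul_mul_assoc, mul_assoc, sq]
      rw [e1, e2, sub_neg_eq_add, ← smul_add, smul_smul, smul_smul,
        mul_assoc ((2 : ℂ)⁻¹), Complex.I_mul_I, mul_neg_one, neg_smul]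
      have e3 : A ^ 2 * opCos A u = opCos A u * A ^ 2 := ((commute_opCos A u).pow_left 2).eq
      rw [e3, opCos_eq, smul_mul_assoc, add_mul]
      abel
    intro u
    have hconst := is_const_of_deriv_eq_zero (fun r => (hderiv r).differentiableAt)
      (fun r => (hderiv r).deriv) u 0
    simp only [neg_zero, opE_zero, opSin_zero, mul_zero, sub_self, smul_zero, add_zero] at hconst
    exact eq_neg_iff_add_eq_zero.mpr hconst
  have h := hasDerivAt_opCos A t
  rwa [key t] at h

end aux

/-- **Duhamel commutator identity.** For a bounded self-adjoint operator `A` and a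
bounded operator `Θ` on a complex Hilbert space,
`Θ ∘ cos (s A) - cos (s A) ∘ Θ = ∫₀ˢ S_A (s - r) ∘ (A²Θ - ΘA²) ∘ cos (r A) dr`. -/
theorem stmt6 {H : Type*} [NormedAddCommGroup H] [InnerProductSpace ℂ H] [CompleteSpace H]
    (A : H →L[ℂ] H) (hA : IsSelfAdjoint A) (Θ : H →L[ℂ] H) :
    ∀ s : ℝ, Θ * opCos A s - opCos A s * Θ =
      ∫ r in (0 : ℝ)..s, opSin A (s - r) * (A ^ 2 * Θ - Θ * A ^ 2) * opCos A r := by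
  intro s
  set φ : ℝ → (H →L[ℂ] H) := fun r =>
    opCos A (s - r) * (Θ * opCos A r) - opSin A (s - r) * (Θ * (A ^ 2 * opSin A r)) with hφdef
  have hsub : ∀ r : ℝ, HasDerivAt (fun r : ℝ => s - r) (-1) r := fun r =>
    (hasDerivAt_id r).const_sub s
  have hcos_sr : ∀ r : ℝ, HasDerivAt (fun r : ℝ => opCos A (s - r)) (A ^ 2 * opSin A (s - r)) r := by
    intro r
    have := (hasDerivAt_opCos' A (s - r)).scomp r (hsub r)
    simp at this ⊢
    exact this
  have hsin_sr : ∀ r : ℝ, HasDerivAt (fun r : ℝ => opSin A (s - r)) (-(opCos A (s - r))) r := by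
    intro r
    have := (hasDerivAt_opSin A (s - r)).scomp r (hsub r)
    simp at this ⊢
    exact this
  have hφ : ∀ r : ℝ, HasDerivAt φ
      (opSin A (s - r) * (A ^ 2 * Θ - Θ * A ^ 2) * opCos A r) r := by
    intro r
    have h1 := (hcos_sr r).mul ((hasDerivAt_opCos' A r).const_mul Θ)
    have h2 := (hsin_sr r).mul (((hasDerivAt_opSin A r).const_mul (A ^ 2)).const_mul Θ)
    have h := h1.sub h2
    refine h.congr_deriv (Eq.symm ?_)
    have hc : A ^ 2 * opSin A (s - r) = opSin A (s - r) * A ^ 2 :=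
      ((commute_opSin A (s - r)).pow_left 2).eq
    rw [mul_sub, sub_mul, ← mul_assoc (opSin A (s - r)) (A ^ 2) Θ, ← hc]
    simp only [mul_neg, neg_mul, mul_assoc]
    abel
  have hint : IntervalIntegrable
      (fun r => opSin A (s - r) * (A ^ 2 * Θ - Θ * A ^ 2) * opCos A r) volume 0 s := by
    apply Continuous.intervalIntegrable
    exact (((continuous_opSin A).comp (continuous_const.sub continuous_id)).mul
      continuous_const).mul (continuous_opCos A)
  have key := intervalIntegral.integral_eq_sub_of_hasDerivAt (fun r _ => hφ r) hint
  rw [key, hφdef]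
  simp [opCos_zero, opSin_zero, sub_zero]
end

section
/- For a continuously differentiable path γ = (γ₁, γ₂) : [0,1] → ℝ² define L_ρ(γ) := ∫₀¹ √( γ₁'(t)² + γ₂'(t)²/(1 + γ₁(t)⁶ γ₂(t)⁶) ) dt, and for p, q ∈ ℝ² define d_ρ(p,q) := inf { L_ρ(γ) : γ : [0,1] → ℝ² continuously differentiable, γ(0) = p, γ(1) = q }. Then the sequence p_n := (1, n) (n ∈ ℕ) is d_ρ-Cauchy, i.e., for every δ > 0 there is N such that d_ρ(p_m, p_n) < δ for all m, n ≥ N, but there is no point p ∈ ℝ² with d_ρ(p_n, p) → 0 as n → ∞. -/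
open MeasureTheory Filter Topology

/-- The `ρ`-length `∫₀¹ √(γ₁'(t)² + γ₂'(t)²/(1 + γ₁(t)⁶ γ₂(t)⁶)) dt` of a `C¹` path
`γ : [0,1] → ℝ²`, for the Riemannian metric `ρ = dt² + dx²/(1 + t⁶x⁶)`. -/
noncomputable def lengthRho (γ : ℝ → ℝ × ℝ) : ℝ :=
  ∫ t in (0 : ℝ)..1,
    Real.sqrt ((deriv γ t).1 ^ 2 +
      (deriv γ t).2 ^ 2 / (1 + (γ t).1 ^ 6 * (γ t).2 ^ 6))

/-- The length distance on `ℝ²` induced by the Riemannian metric `ρ = dt² + dx²/(1 + t⁶x⁶)`. -/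
noncomputable def distRho (p q : ℝ × ℝ) : ℝ :=
  sInf {L : ℝ | ∃ γ : ℝ → ℝ × ℝ, ContDiff ℝ 1 γ ∧ γ 0 = p ∧ γ 1 = q ∧ L = lengthRho γ}

lemma lengthRho_nonneg (γ : ℝ → ℝ × ℝ) : 0 ≤ lengthRho γ :=
  intervalIntegral.integral_nonneg (by norm_num) (fun t _ => Real.sqrt_nonneg _)

lemma bddBelow_set (p q : ℝ × ℝ) :
    BddBelow {L : ℝ | ∃ γ : ℝ → ℝ × ℝ, ContDiff ℝ 1 γ ∧ γ 0 = p ∧ γ 1 = q ∧ L = lengthRho γ} := by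
  refine ⟨0, fun L hL => ?_⟩
  obtain ⟨γ, -, -, -, rfl⟩ := hL
  exact lengthRho_nonneg γ

lemma set_nonempty (p q : ℝ × ℝ) :
    ({L : ℝ | ∃ γ : ℝ → ℝ × ℝ, ContDiff ℝ 1 γ ∧ γ 0 = p ∧ γ 1 = q ∧ L = lengthRho γ}).Nonempty := by
  refine ⟨lengthRho (fun s => p + s • (q - p)), fun s => p + s • (q - p), ?_, by simp, by simp, rfl⟩
  exact contDiff_const.add (contDiff_id.smul contDiff_const)

lemma distRho_le_straight (a b : ℝ) (ha : 1 ≤ a) (hab : a ≤ b) :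
    distRho (1, a) (1, b) ≤ 1 / (2 * a ^ 2) := by
  set γ : ℝ → ℝ × ℝ := fun s => (1, a + s * (b - a)) with hγ
  have hder : ∀ s : ℝ, HasDerivAt γ (0, b - a) s := fun s =>
    (hasDerivAt_const s (1:ℝ)).prodMk (by simpa using ((hasDerivAt_id s).mul_const (b - a)).const_add a)
  have hd : ∀ s, deriv γ s = (0, b - a) := fun s => (hder s).deriv
  have hc : ContDiff ℝ 1 γ :=
    contDiff_const.prodMk (contDiff_const.add (contDiff_id.mul contDiff_const))
  have hx : ∀ s ∈ Set.Icc (0:ℝ) 1, 1 ≤ a + s * (b - a) := by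
    intro s hs
    obtain ⟨h0, h1⟩ := hs
    nlinarith
  have hmem : lengthRho γ ∈
      {L : ℝ | ∃ δ : ℝ → ℝ × ℝ, ContDiff ℝ 1 δ ∧ δ 0 = (1, a) ∧ δ 1 = (1, b) ∧ L = lengthRho δ} :=
    ⟨γ, hc, by simp [hγ], by simp [hγ], rfl⟩
  refine le_trans (csInf_le (bddBelow_set _ _) hmem) ?_
  -- rewrite the length as an explicit integral
  have hlen : lengthRho γ =
      ∫ s in (0:ℝ)..1, Real.sqrt ((b - a) ^ 2 / (1 + (a + s * (b - a)) ^ 6)) := by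
    unfold lengthRho
    refine intervalIntegral.integral_congr (fun s _ => ?_)
    rw [hd]
    simp [hγ]
  rw [hlen]
  have hΦ : ∀ s ∈ Set.uIcc (0:ℝ) 1,
      HasDerivAt (fun s : ℝ => -(1/2) * ((a + s * (b - a)) ^ 2)⁻¹)
        ((b - a) * ((a + s * (b - a)) ^ 3)⁻¹) s := by
    intro s hs
    rw [Set.uIcc_of_le (by norm_num : (0:ℝ) ≤ 1)] at hs
    have hxs : 1 ≤ a + s * (b - a) := hx s hs
    have hpos : (0:ℝ) < a + s * (b - a) := lt_of_lt_of_le one_pos hxs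
    have h1 : HasDerivAt (fun s : ℝ => a + s * (b - a)) (b - a) s := by
      simpa using ((hasDerivAt_id s).mul_const (b - a)).const_add a
    have h2 : HasDerivAt (fun s : ℝ => (a + s * (b - a)) ^ 2)
        (2 * (a + s * (b - a)) * (b - a)) s := by
      have := h1.fun_pow 2
      simpa [mul_comm, mul_assoc, mul_left_comm] using this
    have h3 := (h2.inv (by positivity)).const_mul (-(1/2) : ℝ)
    refine h3.congr_deriv ?_
    field_simp
  have hint1 : IntervalIntegrable
      (fun s => Real.sqrt ((b - a) ^ 2 / (1 + (a + s * (b - a)) ^ 6))) volume 0 1 := by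
    apply Continuous.intervalIntegrable
    have hden : ∀ s : ℝ, (1 + (a + s * (b - a)) ^ 6) ≠ 0 := by
      intro s; positivity
    exact (continuous_const.div (by continuity) hden).sqrt
  have hint2 : IntervalIntegrable
      (fun s => (b - a) * ((a + s * (b - a)) ^ 3)⁻¹) volume 0 1 := by
    apply ContinuousOn.intervalIntegrable
    rw [Set.uIcc_of_le (by norm_num : (0:ℝ) ≤ 1)]
    apply ContinuousOn.mul continuousOn_const
    apply ContinuousOn.inv₀
    · fun_prop
    · intro s hs
      have := hx s hs
      positivity
  have hmono : ∫ s in (0:ℝ)..1, Real.sqrt ((b - a) ^ 2 / (1 + (a + s * (b - a)) ^ 6)) ≤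
      ∫ s in (0:ℝ)..1, (b - a) * ((a + s * (b - a)) ^ 3)⁻¹ := by
    apply intervalIntegral.integral_mono_on (by norm_num) hint1 hint2
    intro s hs
    have hxs : 1 ≤ a + s * (b - a) := hx s hs
    have hxpos : (0:ℝ) < a + s * (b - a) := lt_of_lt_of_le one_pos hxs
    have h1 : (b - a) ^ 2 / (1 + (a + s * (b - a)) ^ 6) ≤
        ((b - a) * ((a + s * (b - a)) ^ 3)⁻¹) ^ 2 := by
      have e : ((b - a) * ((a + s * (b - a)) ^ 3)⁻¹) ^ 2 =
          (b - a) ^ 2 / (a + s * (b - a)) ^ 6 := by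
        rw [mul_pow, inv_pow, ← pow_mul, div_eq_mul_inv]
      rw [e]
      apply div_le_div_of_nonneg_left (by positivity) (by positivity) (by linarith [pow_pos hxpos 6])
    calc Real.sqrt ((b - a) ^ 2 / (1 + (a + s * (b - a)) ^ 6))
        ≤ Real.sqrt (((b - a) * ((a + s * (b - a)) ^ 3)⁻¹) ^ 2) := Real.sqrt_le_sqrt h1
      _ = (b - a) * ((a + s * (b - a)) ^ 3)⁻¹ := Real.sqrt_sq (by
          have : 0 ≤ b - a := sub_nonneg.2 hab
          positivity)
  refine hmono.trans ?_
  rw [intervalIntegral.integral_eq_sub_of_hasDerivAt hΦ hint2]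
  have hb : 1 ≤ b := ha.trans hab
  have h1 : a + 1 * (b - a) = b := by ring
  have h0 : a + 0 * (b - a) = a := by ring
  rw [h1, h0]
  have hbp : (0:ℝ) ≤ (b ^ 2)⁻¹ := by positivity
  have e : 1 / (2 * a ^ 2) = 1 / 2 * (a ^ 2)⁻¹ := by ring
  rw [e]
  nlinarith [hbp]

lemma lengthRho_reverse (γ : ℝ → ℝ × ℝ) (hγ : ContDiff ℝ 1 γ) :
    lengthRho (fun s => γ (1 - s)) = lengthRho γ := by
  have hdiff : Differentiable ℝ γ := hγ.differentiable one_ne_zero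
  have hd : ∀ s : ℝ, deriv (fun s => γ (1 - s)) s = -deriv γ (1 - s) := by
    intro s
    have h1 : HasDerivAt (fun s : ℝ => 1 - s) (-1) s := by
      simpa using (hasDerivAt_id s).const_sub 1
    have h2 := ((hdiff (1 - s)).hasDerivAt).scomp s h1
    simpa [Function.comp_def] using h2.deriv
  unfold lengthRho
  have he : (fun t => Real.sqrt ((deriv (fun s => γ (1 - s)) t).1 ^ 2 +
        (deriv (fun s => γ (1 - s)) t).2 ^ 2 /
          (1 + ((fun s => γ (1 - s)) t).1 ^ 6 * ((fun s => γ (1 - s)) t).2 ^ 6))) =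
      (fun t => Real.sqrt ((deriv γ (1 - t)).1 ^ 2 +
        (deriv γ (1 - t)).2 ^ 2 / (1 + (γ (1 - t)).1 ^ 6 * (γ (1 - t)).2 ^ 6))) := by
    funext t
    rw [hd t]
    simp [neg_pow]
  rw [he]
  have := intervalIntegral.integral_comp_sub_left (a := (0:ℝ)) (b := 1)
    (fun t => Real.sqrt ((deriv γ t).1 ^ 2 +
      (deriv γ t).2 ^ 2 / (1 + (γ t).1 ^ 6 * (γ t).2 ^ 6))) 1
  simpa using this

lemma distRho_symm (p q : ℝ × ℝ) : distRho p q = distRho q p := by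
  have key : ∀ p q : ℝ × ℝ,
      {L : ℝ | ∃ γ : ℝ → ℝ × ℝ, ContDiff ℝ 1 γ ∧ γ 0 = p ∧ γ 1 = q ∧ L = lengthRho γ} ⊆
      {L : ℝ | ∃ γ : ℝ → ℝ × ℝ, ContDiff ℝ 1 γ ∧ γ 0 = q ∧ γ 1 = p ∧ L = lengthRho γ} := by
    rintro p q L ⟨γ, hγ, h0, h1, rfl⟩
    exact ⟨fun s => γ (1 - s), hγ.comp (contDiff_const.sub contDiff_id),
      by simpa using h1, by simpa using h0, (lengthRho_reverse γ hγ).symm⟩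
  unfold distRho
  congr 1
  exact Set.Subset.antisymm (key p q) (key q p)

noncomputable def chi (t : ℝ) : ℝ := ((1 + (t - 1) ^ 2) ^ 2)⁻¹
noncomputable def chi' (t : ℝ) : ℝ := -(4 * (t - 1)) * ((1 + (t - 1) ^ 2) ^ 3)⁻¹
noncomputable def gg (x : ℝ) : ℝ := x / Real.sqrt (1 + x ^ 2)
noncomputable def gg' (x : ℝ) : ℝ := ((1 + x ^ 2) * Real.sqrt (1 + x ^ 2))⁻¹
noncomputable def ff (p : ℝ × ℝ) : ℝ := 1 / 4 * (chi p.1 * gg p.2)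

lemma one_add_sq_pos (u : ℝ) : (0:ℝ) < 1 + u ^ 2 := by positivity

lemma sqrt_one_add_sq_pos (x : ℝ) : 0 < Real.sqrt (1 + x ^ 2) :=
  Real.sqrt_pos.2 (one_add_sq_pos x)

lemma sq_sqrt_one_add_sq (x : ℝ) : Real.sqrt (1 + x ^ 2) ^ 2 = 1 + x ^ 2 :=
  Real.sq_sqrt (le_of_lt (one_add_sq_pos x))

lemma hasDerivAt_chi (t : ℝ) : HasDerivAt chi (chi' t) t := by
  have h0 : HasDerivAt (fun t : ℝ => t - 1) 1 t := (hasDerivAt_id t).sub_const 1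
  have h1 : HasDerivAt (fun t : ℝ => 1 + (t - 1) ^ 2) (2 * (t - 1)) t := by
    simpa using (h0.pow 2).const_add 1
  have h2 : HasDerivAt (fun t : ℝ => (1 + (t - 1) ^ 2) ^ 2)
      (2 * (1 + (t - 1) ^ 2) * (2 * (t - 1))) t := by
    simpa [mul_comm, mul_assoc, mul_left_comm] using h1.fun_pow 2
  have h3 := h2.inv (by positivity)
  refine h3.congr_deriv ?_
  unfold chi'
  have h4 : (0:ℝ) < 1 + (t - 1) ^ 2 := one_add_sq_pos _
  field_simp
  ring

lemma hasDerivAt_gg (x : ℝ) : HasDerivAt gg (gg' x) x := by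
  have h1 : HasDerivAt (fun x : ℝ => 1 + x ^ 2) (2 * x) x := by
    simpa using ((hasDerivAt_id x).pow 2).const_add 1
  have h2 : HasDerivAt (fun x : ℝ => Real.sqrt (1 + x ^ 2))
      (1 / (2 * Real.sqrt (1 + x ^ 2)) * (2 * x)) x :=
    (Real.hasDerivAt_sqrt (ne_of_gt (one_add_sq_pos x))).comp x h1
  have h3 := (hasDerivAt_id x).div h2 (ne_of_gt (sqrt_one_add_sq_pos x))
  refine h3.congr_deriv ?_
  unfold gg'
  have hs := sqrt_one_add_sq_pos x
  have hsq := sq_sqrt_one_add_sq x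
  simp only [id]
  field_simp
  linear_combination x ^ 2 * hsq

lemma chi_pos (t : ℝ) : 0 < chi t := by unfold chi; positivity

lemma chi_le_one (t : ℝ) : chi t ≤ 1 := by
  unfold chi
  rw [inv_le_one_iff₀]
  right
  nlinarith [sq_nonneg (t - 1)]

lemma gg_sq (x : ℝ) : gg x ^ 2 = x ^ 2 / (1 + x ^ 2) := by
  unfold gg
  rw [div_pow, sq_sqrt_one_add_sq]

lemma gg'_sq (x : ℝ) : gg' x ^ 2 = ((1 + x ^ 2) ^ 3)⁻¹ := by
  unfold gg'
  rw [inv_pow, mul_pow, sq_sqrt_one_add_sq]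
  congr 1

lemma abs_gg_lt_one (x : ℝ) : |gg x| < 1 := by
  have h : gg x ^ 2 < 1 := by
    rw [gg_sq]
    rw [div_lt_one (one_add_sq_pos x)]
    linarith
  nlinarith [abs_nonneg (gg x), sq_abs (gg x)]

lemma chi'_sq_le (t : ℝ) : chi' t ^ 2 ≤ 4 := by
  unfold chi'
  set u := t - 1 with hu
  have hA : (0:ℝ) < 1 + u ^ 2 := one_add_sq_pos _
  have hA' : (1 + u ^ 2) ≠ 0 := hA.ne'
  have e : (-(4 * u) * ((1 + u ^ 2) ^ 3)⁻¹) ^ 2 = 16 * u ^ 2 / (1 + u ^ 2) ^ 6 := by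
    field_simp
    ring
  rw [e, div_le_iff₀ (by positivity)]
  have h0 : 16 * u ^ 2 ≤ 4 * (1 + u ^ 2) ^ 2 := by nlinarith [sq_nonneg (u ^ 2 - 1)]
  have h1 : (1 + u ^ 2) ^ 2 ≤ (1 + u ^ 2) ^ 6 :=
    pow_le_pow_right₀ (by nlinarith [sq_nonneg u]) (by norm_num)
  linarith

lemma chi_sq_t6 (t : ℝ) : chi t ^ 2 * t ^ 6 ≤ 8 := by
  unfold chi
  set u := t - 1 with hu
  have ht : t = 1 + u := by rw [hu]; ring
  have hA : (0:ℝ) < 1 + u ^ 2 := one_add_sq_pos _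
  have hA' : (1 + u ^ 2) ≠ 0 := hA.ne'
  have e : (((1 + u ^ 2) ^ 2)⁻¹) ^ 2 * t ^ 6 = t ^ 6 / (1 + u ^ 2) ^ 4 := by
    field_simp
  rw [e, div_le_iff₀ (by positivity)]
  have h2 : (1 + u) ^ 2 ≤ 2 * (1 + u ^ 2) := by nlinarith [sq_nonneg (1 - u)]
  have h3 : ((1 + u) ^ 2) ^ 3 ≤ (2 * (1 + u ^ 2)) ^ 3 :=
    pow_le_pow_left₀ (sq_nonneg _) h2 3
  have h4 : (1 + u ^ 2) ^ 3 ≤ (1 + u ^ 2) ^ 4 :=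
    pow_le_pow_right₀ (by nlinarith [sq_nonneg u]) (by norm_num)
  calc t ^ 6 = ((1 + u) ^ 2) ^ 3 := by rw [ht]; ring
    _ ≤ (2 * (1 + u ^ 2)) ^ 3 := h3
    _ = 8 * (1 + u ^ 2) ^ 3 := by ring
    _ ≤ 8 * (1 + u ^ 2) ^ 4 := by linarith

lemma coeff_bound (t x : ℝ) :
    (1 / 4 * (chi' t * gg x)) ^ 2 +
      (1 + t ^ 6 * x ^ 6) * (1 / 4 * (chi t * gg' x)) ^ 2 ≤ 1 := by
  have h1 : (chi' t * gg x) ^ 2 ≤ 4 := by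
    rw [mul_pow]
    calc chi' t ^ 2 * gg x ^ 2 ≤ 4 * 1 := by
          apply mul_le_mul (chi'_sq_le t) ?_ (sq_nonneg _) (by norm_num)
          nlinarith [abs_gg_lt_one x, abs_nonneg (gg x), sq_abs (gg x)]
      _ = 4 := by norm_num
  have hA : (0:ℝ) < 1 + x ^ 2 := one_add_sq_pos x
  have h2 : (1 + t ^ 6 * x ^ 6) * (chi t * gg' x) ^ 2 ≤ 9 := by
    rw [mul_pow, gg'_sq]
    have hx6 : x ^ 6 ≤ (1 + x ^ 2) ^ 3 := by nlinarith [sq_nonneg x, sq_nonneg (x^2)]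
    have hchi1 : chi t ^ 2 ≤ 1 := by
      nlinarith [chi_le_one t, chi_pos t]
    have hkey : (1 + t ^ 6 * x ^ 6) * (chi t ^ 2 * ((1 + x ^ 2) ^ 3)⁻¹) =
        chi t ^ 2 * ((1 + x ^ 2) ^ 3)⁻¹ + (chi t ^ 2 * t ^ 6) * (x ^ 6 / (1 + x ^ 2) ^ 3) := by
      field_simp
    rw [hkey]
    have hb1 : chi t ^ 2 * ((1 + x ^ 2) ^ 3)⁻¹ ≤ 1 := by
      calc chi t ^ 2 * ((1 + x ^ 2) ^ 3)⁻¹ ≤ 1 * 1 := by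
            apply mul_le_mul hchi1 ?_ (by positivity) (by norm_num)
            rw [inv_le_one_iff₀]; right; nlinarith [sq_nonneg x, sq_nonneg (x^2), sq_nonneg (x^3)]
        _ = 1 := by norm_num
    have hb2 : (chi t ^ 2 * t ^ 6) * (x ^ 6 / (1 + x ^ 2) ^ 3) ≤ 8 := by
      calc (chi t ^ 2 * t ^ 6) * (x ^ 6 / (1 + x ^ 2) ^ 3) ≤ 8 * 1 := by
            apply mul_le_mul (chi_sq_t6 t) ?_ (by positivity) (by norm_num)
            rw [div_le_one (by positivity)]
            exact hx6
        _ = 8 := by norm_num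
    linarith
  nlinarith [h1, h2, sq_nonneg (chi' t * gg x), sq_nonneg (chi t * gg' x),
    mul_nonneg (by positivity : (0:ℝ) ≤ 1 + t ^ 6 * x ^ 6) (sq_nonneg (chi t * gg' x))]

lemma continuous_chi : Continuous chi := by
  apply Continuous.inv₀ (by continuity)
  intro t; positivity

lemma continuous_chi' : Continuous chi' := by
  apply Continuous.mul (by continuity)
  apply Continuous.inv₀ (by continuity)
  intro t; positivity

lemma continuous_sqrt_one_add_sq : Continuous (fun x : ℝ => Real.sqrt (1 + x ^ 2)) := by
  apply Real.continuous_sqrt.comp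
  continuity

lemma continuous_gg : Continuous gg :=
  continuous_id.div continuous_sqrt_one_add_sq (fun x => (sqrt_one_add_sq_pos x).ne')

lemma continuous_gg' : Continuous gg' := by
  apply Continuous.inv₀ ((by continuity : Continuous (fun x : ℝ => 1 + x ^ 2)).mul
    continuous_sqrt_one_add_sq)
  intro x
  have h1 := one_add_sq_pos x
  have h2 := sqrt_one_add_sq_pos x
  show (1 + x ^ 2) * Real.sqrt (1 + x ^ 2) ≠ 0
  positivity

lemma cs_pointwise (A B a b W : ℝ) (hW1 : 1 ≤ W) (hAB : A ^ 2 + W * B ^ 2 ≤ 1) :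
    |A * a + B * b| ≤ Real.sqrt (a ^ 2 + b ^ 2 / W) := by
  have hWpos : (0:ℝ) < W := lt_of_lt_of_le one_pos hW1
  have hD : W * (b ^ 2 / W) = b ^ 2 := by field_simp
  have hDnn : 0 ≤ b ^ 2 / W := by positivity
  have hD3 : W * (b ^ 2 / W) * A ^ 2 = b ^ 2 * A ^ 2 := by rw [hD]
  have hD4 : W * (b ^ 2 / W) * B ^ 2 = b ^ 2 * B ^ 2 := by rw [hD]
  have h5 : 0 ≤ A ^ 2 * (b ^ 2 / W) + W * B ^ 2 * a ^ 2 - 2 * A * B * a * b := by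
    have hWX : 0 ≤ W * (A ^ 2 * (b ^ 2 / W) + W * B ^ 2 * a ^ 2 - 2 * A * B * a * b) := by
      nlinarith [sq_nonneg (A * b - W * B * a), hD3]
    nlinarith [hWX, hWpos]
  have hsq : (A * a + B * b) ^ 2 ≤ a ^ 2 + b ^ 2 / W := by
    nlinarith [h5, hD4, mul_nonneg (sub_nonneg.2 hAB) (sq_nonneg a),
      mul_nonneg (sub_nonneg.2 hAB) hDnn]
  calc |A * a + B * b| = Real.sqrt ((A * a + B * b) ^ 2) := (Real.sqrt_sq_eq_abs _).symm
    _ ≤ Real.sqrt (a ^ 2 + b ^ 2 / W) := Real.sqrt_le_sqrt hsq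

lemma abs_ff_le_lengthRho (γ : ℝ → ℝ × ℝ) (hγ : ContDiff ℝ 1 γ) :
    |ff (γ 1) - ff (γ 0)| ≤ lengthRho γ := by
  have hdiff : Differentiable ℝ γ := hγ.differentiable one_ne_zero
  have hγ1 : ∀ s, HasDerivAt (fun s => (γ s).1) ((deriv γ s).1) s := fun s =>
    (ContinuousLinearMap.fst ℝ ℝ ℝ).hasFDerivAt.comp_hasDerivAt s (hdiff s).hasDerivAt
  have hγ2 : ∀ s, HasDerivAt (fun s => (γ s).2) ((deriv γ s).2) s := fun s =>
    (ContinuousLinearMap.snd ℝ ℝ ℝ).hasFDerivAt.comp_hasDerivAt s (hdiff s).hasDerivAt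
  set F' : ℝ → ℝ := fun s => 1 / 4 *
    (chi' (γ s).1 * (deriv γ s).1 * gg (γ s).2 +
      chi (γ s).1 * (gg' (γ s).2 * (deriv γ s).2)) with hF'
  have hF : ∀ s : ℝ, HasDerivAt (fun s => ff (γ s)) (F' s) s := by
    intro s
    have hc : HasDerivAt (fun s => chi (γ s).1) (chi' (γ s).1 * (deriv γ s).1) s :=
      (hasDerivAt_chi _).comp s (hγ1 s)
    have hg : HasDerivAt (fun s => gg (γ s).2) (gg' (γ s).2 * (deriv γ s).2) s :=
      (hasDerivAt_gg _).comp s (hγ2 s)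
    have h := (hc.mul hg).const_mul (1/4 : ℝ)
    have he : (fun s => ff (γ s)) = fun s => 1/4 * (chi (γ s).1 * gg (γ s).2) := rfl
    rw [he, hF']
    exact h
  have hbound : ∀ s : ℝ, |F' s| ≤ Real.sqrt ((deriv γ s).1 ^ 2 +
      (deriv γ s).2 ^ 2 / (1 + (γ s).1 ^ 6 * (γ s).2 ^ 6)) := by
    intro s
    have hW1 : (1:ℝ) ≤ 1 + (γ s).1 ^ 6 * (γ s).2 ^ 6 := by
      nlinarith [sq_nonneg ((γ s).1 ^ 3 * (γ s).2 ^ 3)]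
    have hF's : F' s = 1 / 4 * (chi' (γ s).1 * gg (γ s).2) * (deriv γ s).1 +
        1 / 4 * (chi (γ s).1 * gg' (γ s).2) * (deriv γ s).2 := by rw [hF']; ring
    rw [hF's]
    exact cs_pointwise _ _ _ _ _ hW1 (coeff_bound (γ s).1 (γ s).2)
  have hcγ1 : Continuous (fun s => (γ s).1) := continuous_fst.comp hγ.continuous
  have hcγ2 : Continuous (fun s => (γ s).2) := continuous_snd.comp hγ.continuous
  have hcd : Continuous (deriv γ) := hγ.continuous_deriv le_rfl
  have hcd1 : Continuous (fun s => (deriv γ s).1) := continuous_fst.comp hcd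
  have hcd2 : Continuous (fun s => (deriv γ s).2) := continuous_snd.comp hcd
  have hcF' : Continuous F' := by
    rw [hF']
    exact continuous_const.mul
      ((((continuous_chi'.comp hcγ1).mul hcd1).mul (continuous_gg.comp hcγ2)).add
        ((continuous_chi.comp hcγ1).mul ((continuous_gg'.comp hcγ2).mul hcd2)))
  have hcI : Continuous (fun s => Real.sqrt ((deriv γ s).1 ^ 2 +
      (deriv γ s).2 ^ 2 / (1 + (γ s).1 ^ 6 * (γ s).2 ^ 6))) := by
    apply Continuous.sqrt
    apply Continuous.add (hcd1.pow 2)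
    apply Continuous.div (hcd2.pow 2)
      (continuous_const.add ((hcγ1.pow 6).mul (hcγ2.pow 6)))
    intro s
    show (1:ℝ) + (γ s).1 ^ 6 * (γ s).2 ^ 6 ≠ 0
    have h1 : (0:ℝ) ≤ (γ s).1 ^ 6 * (γ s).2 ^ 6 := by positivity
    nlinarith [h1]
  have hFTC : ∫ s in (0:ℝ)..1, F' s = ff (γ 1) - ff (γ 0) :=
    intervalIntegral.integral_eq_sub_of_hasDerivAt (fun s _ => hF s)
      (hcF'.intervalIntegrable 0 1)
  rw [← hFTC]
  calc |∫ s in (0:ℝ)..1, F' s| ≤ ∫ s in (0:ℝ)..1, |F' s| :=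
        intervalIntegral.abs_integral_le_integral_abs (by norm_num)
    _ ≤ ∫ s in (0:ℝ)..1, Real.sqrt ((deriv γ s).1 ^ 2 +
          (deriv γ s).2 ^ 2 / (1 + (γ s).1 ^ 6 * (γ s).2 ^ 6)) := by
        apply intervalIntegral.integral_mono_on (by norm_num)
          (hcF'.abs.intervalIntegrable 0 1) (hcI.intervalIntegrable 0 1)
        exact fun s _ => hbound s
    _ = lengthRho γ := rfl

lemma chi_one : chi 1 = 1 := by norm_num [chi]

lemma gg_lower (x : ℝ) (hx : 1 ≤ x) : 1 - 1 / x ≤ gg x := by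
  have hxp : (0:ℝ) < x := lt_of_lt_of_le one_pos hx
  have hinv : x * (1 / x) = 1 := by field_simp
  have hu1 : 1 / x ≤ 1 := by
    rw [div_le_one hxp]; exact hx
  have hs : Real.sqrt (1 + x ^ 2) ≤ x + 1 / x := by
    rw [show x + 1 / x = Real.sqrt ((x + 1 / x) ^ 2) from
      (Real.sqrt_sq (by positivity)).symm]
    apply Real.sqrt_le_sqrt
    nlinarith [sq_nonneg (1 / x), hinv]
  have hgg : x / (x + 1 / x) ≤ gg x := by
    unfold gg
    exact div_le_div_of_nonneg_left (le_of_lt hxp) (sqrt_one_add_sq_pos x) hs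
  refine le_trans ?_ hgg
  rw [le_div_iff₀ (by positivity)]
  nlinarith [hinv, hu1, sq_nonneg (1 / x)]

lemma ff_lt_quarter (p : ℝ × ℝ) : ff p < 1 / 4 := by
  have h1 : chi p.1 * gg p.2 < 1 := by
    calc chi p.1 * gg p.2 ≤ chi p.1 * |gg p.2| :=
          mul_le_mul_of_nonneg_left (le_abs_self _) (chi_pos _).le
      _ ≤ 1 * |gg p.2| := mul_le_mul_of_nonneg_right (chi_le_one _) (abs_nonneg _)
      _ = |gg p.2| := one_mul _
      _ < 1 := abs_gg_lt_one _
  unfold ff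
  linarith

lemma distRho_lower (q p : ℝ × ℝ) : ff q - ff p ≤ distRho q p := by
  apply le_csInf (set_nonempty q p)
  rintro L ⟨γ, hγ, h0, h1, rfl⟩
  have h := abs_ff_le_lengthRho γ hγ
  rw [h0, h1] at h
  calc ff q - ff p = -(ff p - ff q) := by ring
    _ ≤ |ff p - ff q| := neg_le_abs _
    _ ≤ lengthRho γ := h

/-- The sequence `pₙ = (1, n)` is Cauchy for the length distance of the
Riemannian metric `ρ = dt² + dx²/(1 + t⁶x⁶)` on `ℝ²`, but has no limit in `ℝ²`: the metric `ρ`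
is not complete. -/
theorem stmt13 :
    (∀ δ : ℝ, 0 < δ → ∃ N : ℕ, ∀ m : ℕ, N ≤ m → ∀ n : ℕ, N ≤ n →
      distRho (1, (m : ℝ)) (1, (n : ℝ)) < δ) ∧
    ¬ ∃ p : ℝ × ℝ, Tendsto (fun n : ℕ => distRho (1, (n : ℝ)) p) atTop (𝓝 0) := by
  constructor
  · intro δ hδ
    refine ⟨⌈1/δ⌉₊ + 1, ?_⟩
    set N : ℕ := ⌈1/δ⌉₊ + 1 with hN
    have hN1 : (1:ℝ) ≤ (N:ℝ) := by
      have : 1 ≤ N := Nat.le_add_left 1 _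
      exact_mod_cast this
    have hNδ : 1 / (N:ℝ) < δ := by
      have h1 : 1/δ ≤ (⌈1/δ⌉₊ : ℝ) := Nat.le_ceil _
      have h2 : (⌈1/δ⌉₊ : ℝ) < (N:ℝ) := by
        rw [hN]; push_cast; linarith
      rw [div_lt_iff₀ (by linarith : (0:ℝ) < (N:ℝ))]
      calc (1:ℝ) = δ * (1/δ) := by field_simp
        _ ≤ δ * (⌈1/δ⌉₊ : ℝ) := by nlinarith
        _ < δ * N := by nlinarith
    have key : ∀ k l : ℕ, N ≤ k → k ≤ l → distRho (1, (k:ℝ)) (1, (l:ℝ)) < δ := by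
      intro k l hk hkl
      have hk1 : (1:ℝ) ≤ (k:ℝ) := le_trans hN1 (by exact_mod_cast hk)
      have h := distRho_le_straight (k:ℝ) (l:ℝ) hk1 (by exact_mod_cast hkl)
      have hkN : (N:ℝ) ≤ (k:ℝ) := by exact_mod_cast hk
      have hb : 1 / (2 * (k:ℝ)^2) ≤ 1 / (N:ℝ) := by
        apply div_le_div_of_nonneg_left (by norm_num) (by linarith)
        nlinarith
      linarith
    intro m hm n hn
    rcases le_total m n with h | h
    · exact key m n hm h
    · rw [distRho_symm]; exact key n m hn h
  · rintro ⟨p, hp⟩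
    have hffp := ff_lt_quarter p
    set c : ℝ := 1/4 - ff p with hc
    have hcpos : 0 < c := by simp only [hc]; linarith
    clear_value c
    obtain ⟨N0, hN0⟩ := (Metric.tendsto_atTop.mp hp) (c/2) (by linarith)
    set n : ℕ := max N0 (⌈1/(2*c)⌉₊ + 1) with hn
    clear_value n
    have hn1 : 1 ≤ n := by rw [hn]; exact le_trans (Nat.le_add_left 1 _) (le_max_right _ _)
    have hn1' : (1:ℝ) ≤ (n:ℝ) := by exact_mod_cast hn1
    have hnc : 1/(2*c) < (n:ℝ) := by
      have h1 : 1/(2*c) ≤ (⌈1/(2*c)⌉₊ : ℝ) := Nat.le_ceil _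
      have h2 : ((⌈1/(2*c)⌉₊ + 1 : ℕ) : ℝ) ≤ (n:ℝ) := by
        have := le_max_right N0 (⌈1/(2*c)⌉₊ + 1)
        rw [← hn] at this
        exact_mod_cast this
      push_cast at h2
      linarith
    have hsmall : 1/(4*(n:ℝ)) < c/2 := by
      rw [div_lt_iff₀ (by positivity)]
      have : 1 < 2*c*(n:ℝ) := by
        rw [div_lt_iff₀ (by positivity)] at hnc
        linarith
      nlinarith
    have hlow : c - 1/(4*(n:ℝ)) ≤ distRho (1, (n:ℝ)) p := by
      refine le_trans ?_ (distRho_lower (1, (n:ℝ)) p)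
      have hffn : 1/4 * (1 - 1/(n:ℝ)) ≤ ff (1, (n:ℝ)) := by
        have := gg_lower (n:ℝ) hn1'
        unfold ff
        simp only [chi_one]
        linarith
      have he : 1/4 * (1 - 1/(n:ℝ)) = 1/4 - 1/(4*(n:ℝ)) := by
        field_simp
      rw [he] at hffn
      simp only [hc]
      linarith
    have hup := hN0 n (by rw [hn]; exact le_max_left _ _)
    rw [Real.dist_eq, sub_zero] at hup
    have : distRho (1, (n:ℝ)) p < c/2 := lt_of_le_of_lt (le_abs_self _) hup
    linarith
end

section
/- For a continuously differentiable path γ = (γ₁, γ₂) : [0,1] → ℝ² define L_{αρ}(γ) := ∫₀¹ √( (1 + γ₁(t)⁶ γ₂(t)⁶) γ₁'(t)² + γ₂'(t)² ) dt, and for p, q ∈ ℝ² define d_{αρ}(p,q) := inf { L_{αρ}(γ) : γ : [0,1] → ℝ² continuously differentiable, γ(0) = p, γ(1) = q }. Then every d_{αρ}-Cauchy sequence (p_n) in ℝ² converges, i.e., there exists p ∈ ℝ² with d_{αρ}(p_n, p) → 0 as n → ∞. -/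
open MeasureTheory Filter Topology

/-- The `αρ`-length `∫₀¹ √((1 + γ₁(t)⁶ γ₂(t)⁶) γ₁'(t)² + γ₂'(t)²) dt` of a `C¹` path
`γ : [0,1] → ℝ²`, for the conformally rescaled Riemannian metric `αρ = (1 + t⁶x⁶) dt² + dx²`. -/
noncomputable def lengthAlphaRho (γ : ℝ → ℝ × ℝ) : ℝ :=
  ∫ t in (0 : ℝ)..1,
    Real.sqrt ((1 + (γ t).1 ^ 6 * (γ t).2 ^ 6) * (deriv γ t).1 ^ 2 + (deriv γ t).2 ^ 2)

/-- The length distance on `ℝ²` induced by the Riemannian metric `αρ = (1 + t⁶x⁶) dt² + dx²`. -/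
noncomputable def distAlphaRho (p q : ℝ × ℝ) : ℝ :=
  sInf {L : ℝ | ∃ γ : ℝ → ℝ × ℝ, ContDiff ℝ 1 γ ∧ γ 0 = p ∧ γ 1 = q ∧ L = lengthAlphaRho γ}

lemma aux_low (c a b : ℝ) (hc : 0 ≤ c) :
    max |a| |b| ≤ Real.sqrt ((1 + c) * a ^ 2 + b ^ 2) := by
  apply max_le
  · rw [← Real.sqrt_sq_eq_abs]
    exact Real.sqrt_le_sqrt (by nlinarith [sq_nonneg a, sq_nonneg b])
  · rw [← Real.sqrt_sq_eq_abs]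
    exact Real.sqrt_le_sqrt (by nlinarith [sq_nonneg a, sq_nonneg b])

lemma aux_up (A a b : ℝ) (hA : 0 ≤ A) :
    Real.sqrt (A * a ^ 2 + b ^ 2) ≤ Real.sqrt A * |a| + |b| := by
  have h1 : A * a ^ 2 + b ^ 2 ≤ (Real.sqrt A * |a| + |b|) ^ 2 := by
    have h2 : Real.sqrt A ^ 2 = A := Real.sq_sqrt hA
    have h3 : |a| ^ 2 = a ^ 2 := sq_abs a
    have h4 : |b| ^ 2 = b ^ 2 := sq_abs b
    nlinarith [mul_nonneg (mul_nonneg (Real.sqrt_nonneg A) (abs_nonneg a)) (abs_nonneg b)]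
  calc Real.sqrt (A * a ^ 2 + b ^ 2) ≤ Real.sqrt ((Real.sqrt A * |a| + |b|) ^ 2) :=
        Real.sqrt_le_sqrt h1
    _ = Real.sqrt A * |a| + |b| := Real.sqrt_sq (by positivity)

/-- integrand continuity -/
lemma cont_integrand (γ : ℝ → ℝ × ℝ) (hγ : ContDiff ℝ 1 γ) :
    Continuous (fun t =>
      Real.sqrt ((1 + (γ t).1 ^ 6 * (γ t).2 ^ 6) * (deriv γ t).1 ^ 2 + (deriv γ t).2 ^ 2)) := by
  have hd : Continuous (deriv γ) := hγ.continuous_deriv le_rfl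
  have hc : Continuous γ := hγ.continuous
  fun_prop

lemma length_ge (γ : ℝ → ℝ × ℝ) (hγ : ContDiff ℝ 1 γ) :
    ‖γ 1 - γ 0‖ ≤ lengthAlphaRho γ := by
  have hd : Continuous (deriv γ) := hγ.continuous_deriv le_rfl
  have hftc : ∫ t in (0:ℝ)..1, deriv γ t = γ 1 - γ 0 := by
    apply intervalIntegral.integral_deriv_eq_sub
    · exact fun t _ => hγ.differentiable one_ne_zero t
    · exact hd.intervalIntegrable 0 1
  rw [← hftc]
  calc ‖∫ t in (0:ℝ)..1, deriv γ t‖ ≤ ∫ t in (0:ℝ)..1, ‖deriv γ t‖ :=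
        intervalIntegral.norm_integral_le_integral_norm (by norm_num)
    _ ≤ lengthAlphaRho γ := by
        apply intervalIntegral.integral_mono_on (by norm_num)
        · exact hd.norm.intervalIntegrable 0 1
        · exact (cont_integrand γ hγ).intervalIntegrable 0 1
        · intro t _
          have := aux_low ((γ t).1 ^ 6 * (γ t).2 ^ 6) (deriv γ t).1 (deriv γ t).2
            (by positivity)
          calc ‖deriv γ t‖ = max ‖(deriv γ t).1‖ ‖(deriv γ t).2‖ := rfl
            _ = max |(deriv γ t).1| |(deriv γ t).2| := rfl
            _ ≤ _ := this

lemma set_nonempty_s14 (p q : ℝ × ℝ) :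
    (lengthAlphaRho (fun t : ℝ => p + t • (q - p))) ∈
      {L : ℝ | ∃ γ : ℝ → ℝ × ℝ, ContDiff ℝ 1 γ ∧ γ 0 = p ∧ γ 1 = q ∧ L = lengthAlphaRho γ} := by
  refine ⟨_, ?_, by simp, by simp, rfl⟩
  exact contDiff_const.add ((contDiff_id).smul contDiff_const)

lemma dist_low (p q : ℝ × ℝ) : ‖q - p‖ ≤ distAlphaRho p q := by
  apply le_csInf ⟨_, set_nonempty_s14 p q⟩
  rintro L ⟨γ, hγ, h0, h1, rfl⟩
  have := length_ge γ hγ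
  rwa [h0, h1] at this

lemma dist_up (p q : ℝ × ℝ) :
    distAlphaRho p q ≤ (Real.sqrt (1 + (2 * ‖p‖ + ‖q‖) ^ 12) + 1) * ‖q - p‖ := by
  set γ : ℝ → ℝ × ℝ := fun t => p + t • (q - p) with hγdef
  have hderiv : ∀ t : ℝ, deriv γ t = q - p := by
    intro t
    have : HasDerivAt γ ((1:ℝ) • (q - p)) t :=
      ((hasDerivAt_id t).smul_const (q - p)).const_add p
    simpa using this.deriv
  have hbdd : BddBelow
      {L : ℝ | ∃ γ : ℝ → ℝ × ℝ, ContDiff ℝ 1 γ ∧ γ 0 = p ∧ γ 1 = q ∧ L = lengthAlphaRho γ} := by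
    refine ⟨0, ?_⟩
    rintro L ⟨γ', hγ', h0, h1, rfl⟩
    exact le_trans (norm_nonneg _) (length_ge γ' hγ')
  refine le_trans (csInf_le hbdd (set_nonempty_s14 p q)) ?_
  set R := 2 * ‖p‖ + ‖q‖ with hR
  have hRnn : 0 ≤ R := by positivity
  have hbound : ∀ t ∈ Set.uIcc (0:ℝ) 1,
      Real.sqrt ((1 + (γ t).1 ^ 6 * (γ t).2 ^ 6) * (deriv γ t).1 ^ 2 + (deriv γ t).2 ^ 2)
        ≤ (Real.sqrt (1 + R ^ 12) + 1) * ‖q - p‖ := by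
    intro t ht
    rw [Set.uIcc_of_le (by norm_num)] at ht
    have ht0 : 0 ≤ t := ht.1
    have ht1 : t ≤ 1 := ht.2
    have hγt : ‖γ t‖ ≤ R := by
      calc ‖γ t‖ ≤ ‖p‖ + ‖t • (q - p)‖ := norm_add_le _ _
        _ = ‖p‖ + |t| * ‖q - p‖ := by rw [norm_smul]; rfl
        _ ≤ ‖p‖ + 1 * ‖q - p‖ := by
            gcongr
            rwa [abs_of_nonneg ht0]
        _ ≤ ‖p‖ + 1 * (‖q‖ + ‖p‖) := by gcongr; exact norm_sub_le q p
        _ = R := by ring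
    have h1 : |(γ t).1| ≤ R := le_trans (norm_fst_le (γ t)) hγt
    have h2 : |(γ t).2| ≤ R := le_trans (norm_snd_le (γ t)) hγt
    have hxy : (γ t).1 ^ 6 * (γ t).2 ^ 6 ≤ R ^ 12 := by
      have e1 : (γ t).1 ^ 6 = |(γ t).1| ^ 6 := (Even.pow_abs (by decide) _).symm
      have e2 : (γ t).2 ^ 6 = |(γ t).2| ^ 6 := (Even.pow_abs (by decide) _).symm
      rw [e1, e2]
      calc |(γ t).1| ^ 6 * |(γ t).2| ^ 6 ≤ R ^ 6 * R ^ 6 :=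
            mul_le_mul (pow_le_pow_left₀ (abs_nonneg _) h1 6)
              (pow_le_pow_left₀ (abs_nonneg _) h2 6) (by positivity) (by positivity)
        _ = R ^ 12 := by ring
    rw [hderiv t]
    calc Real.sqrt ((1 + (γ t).1 ^ 6 * (γ t).2 ^ 6) * (q - p).1 ^ 2 + (q - p).2 ^ 2)
        ≤ Real.sqrt ((1 + R ^ 12) * (q - p).1 ^ 2 + (q - p).2 ^ 2) := by
          apply Real.sqrt_le_sqrt
          have : (0:ℝ) ≤ (q - p).1 ^ 2 := sq_nonneg _
          nlinarith
      _ ≤ Real.sqrt (1 + R ^ 12) * |(q - p).1| + |(q - p).2| :=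
          aux_up _ _ _ (by positivity)
      _ ≤ Real.sqrt (1 + R ^ 12) * ‖q - p‖ + ‖q - p‖ := by
          gcongr
          · exact norm_fst_le (q - p)
          · exact norm_snd_le (q - p)
      _ = (Real.sqrt (1 + R ^ 12) + 1) * ‖q - p‖ := by ring
  have hγc : ContDiff ℝ 1 γ := contDiff_const.add ((contDiff_id).smul contDiff_const)
  calc lengthAlphaRho γ
      ≤ ∫ _ in (0:ℝ)..1, (Real.sqrt (1 + R ^ 12) + 1) * ‖q - p‖ := by
        apply intervalIntegral.integral_mono_on (by norm_num)
        · exact (cont_integrand γ hγc).intervalIntegrable 0 1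
        · exact intervalIntegrable_const
        · intro t ht
          exact hbound t (by rw [Set.uIcc_of_le (by norm_num)]; exact ht)
    _ = (Real.sqrt (1 + R ^ 12) + 1) * ‖q - p‖ := by simp

/-- The length distance induced by the conformally rescaled Riemannian metric
`αρ = (1 + t⁶x⁶) dt² + dx²` on `ℝ²` is complete: every Cauchy sequence converges. -/
theorem stmt14 (p : ℕ → ℝ × ℝ)
    (hcauchy : ∀ δ : ℝ, 0 < δ → ∃ N : ℕ, ∀ m : ℕ, N ≤ m → ∀ n : ℕ, N ≤ n →
      distAlphaRho (p m) (p n) < δ) :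
    ∃ q : ℝ × ℝ, Tendsto (fun n : ℕ => distAlphaRho (p n) q) atTop (𝓝 0) := by
  have hcs : CauchySeq p := by
    rw [Metric.cauchySeq_iff]
    intro ε hε
    obtain ⟨N, hN⟩ := hcauchy ε hε
    refine ⟨N, fun m hm n hn => ?_⟩
    calc dist (p m) (p n) = ‖p n - p m‖ := by rw [dist_eq_norm, norm_sub_rev]
      _ ≤ distAlphaRho (p m) (p n) := dist_low _ _
      _ < ε := hN m hm n hn
  obtain ⟨q, hq⟩ := cauchySeq_tendsto_of_complete hcs
  refine ⟨q, ?_⟩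
  have h0 : ∀ n, 0 ≤ distAlphaRho (p n) q := fun n =>
    le_trans (norm_nonneg _) (dist_low _ _)
  have hle : ∀ n, distAlphaRho (p n) q ≤
      (Real.sqrt (1 + (2 * ‖p n‖ + ‖q‖) ^ 12) + 1) * ‖q - p n‖ := fun n => dist_up _ _
  have htend : Tendsto (fun n =>
      (Real.sqrt (1 + (2 * ‖p n‖ + ‖q‖) ^ 12) + 1) * ‖q - p n‖) atTop (𝓝 0) := by
    have hg : Continuous (fun x : ℝ × ℝ =>
        (Real.sqrt (1 + (2 * ‖x‖ + ‖q‖) ^ 12) + 1) * ‖q - x‖) := by fun_prop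
    have := (hg.tendsto q).comp hq
    simpa [Function.comp_def] using this
  exact squeeze_zero h0 hle htend
end
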